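/- Let S be a triangulated category with arbitrary coproducts, and let F : S → T be an exact functor to a triangulated category T that preserves coproducts and has a right adjoint G. Then G preserves coproducts if and only if F sends compact objects of S to compact objects of T, provided S is compactly generated. -/

import Mathlib

open CategoryTheory CategoryTheory.Limits CategoryTheory.Pretriangulated Opposite

universe v u₁ u₂

/-- An object `X` of a preadditive category is compact if the functor `Hom(X, -)`
(with values in abelian groups) preserves all (set-indexed) coproducts. -/
def IsCompactObj {C : Type u₁} [Category.{v} C] [Preadditive C] (X : C) : Prop :=
  ∀ ι : Type v, Nonempty
    (PreservesColimitsOfShape (Discrete ι) (preadditiveCoyoneda.obj (Opposite.op X)))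

section Adj

variable {S : Type u₁} [Category.{v} S] [Preadditive S]
variable {T : Type u₂} [Category.{v} T] [Preadditive T]

/-- The natural isomorphism `Hom(F X, -) ≅ G ⋙ Hom(X, -)` coming from an adjunction `F ⊣ G`. -/
noncomputable def adjCoyonedaIso (F : S ⥤ T) (G : T ⥤ S) (adj : F ⊣ G) [G.Additive] (X : S) :
    preadditiveCoyoneda.obj (op (F.obj X)) ≅ G ⋙ preadditiveCoyoneda.obj (op X) :=
  NatIso.ofComponents
    (fun Y => AddEquiv.toAddCommGrpIso
      (show (F.obj X ⟶ Y) ≃+ (X ⟶ G.obj Y) from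
      { toFun := fun f => (adj.homEquiv X Y) f
        invFun := fun g => (adj.homEquiv X Y).symm g
        left_inv := fun f => (adj.homEquiv X Y).symm_apply_apply f
        right_inv := fun g => (adj.homEquiv X Y).apply_symm_apply g
        map_add' := fun f g => by
          simp only [Adjunction.homEquiv_unit, Functor.map_add, Preadditive.comp_add] }))
    (fun {Y Y'} k => by
      ext f
      exact adj.homEquiv_naturality_right f k)

lemma isCompactObj_of_adj (F : S ⥤ T) (G : T ⥤ S) (adj : F ⊣ G) [G.Additive] (X : S)
    (hX : IsCompactObj X)
    (hG : ∀ ι : Type v, Nonempty (PreservesColimitsOfShape (Discrete ι) G)) :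
    IsCompactObj (F.obj X) := fun ι => by
  obtain ⟨h1⟩ := hG ι
  obtain ⟨h2⟩ := hX ι
  exact ⟨preservesColimitsOfShape_of_natIso (adjCoyonedaIso F G adj X).symm⟩

end Adj

section Shift

variable {S : Type u₁} [Category.{v} S] [Preadditive S] [HasShift S ℤ]
  [∀ n : ℤ, (shiftFunctor S n).Additive]

lemma isCompactObj_shift {C : S} (hC : IsCompactObj C) (n : ℤ) :
    IsCompactObj (C⟦n⟧) :=
  isCompactObj_of_adj (shiftFunctor S n) (shiftFunctor S (-n))
    (shiftEquiv S n).toAdjunction C hC (fun _ => ⟨inferInstance⟩)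

end Shift

section Key

variable {S : Type u₁} [Category.{v} S] [HasZeroObject S] [HasShift S ℤ]
  [Preadditive S] [∀ n : ℤ, (shiftFunctor S n).Additive] [Pretriangulated S]

/-- A morphism inducing bijections on maps from all compact objects is an isomorphism,
provided compact objects generate. -/
lemma isIso_of_compact_bijective
    (hgen : ∀ X : S, (∀ C : S, IsCompactObj C → ∀ f : C ⟶ X, f = 0) → IsZero X)
    {A B : S} (f : A ⟶ B)
    (hbij : ∀ C : S, IsCompactObj C → Function.Bijective (fun g : C ⟶ A => g ≫ f)) :
    IsIso f := by
  obtain ⟨Z, g, h, hT⟩ := Pretriangulated.distinguished_cocone_triangle f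
  have hZ : IsZero Z := by
    refine hgen Z (fun C hC u => ?_)
    -- the adjunction `(-)⟦-1⟧ ⊣ (-)⟦1⟧`
    let adj1 := (shiftEquiv' S (-1 : ℤ) (1 : ℤ) (by ring)).toAdjunction
    have huh : u ≫ h = 0 := by
      have h0 : (u ≫ h) ≫ f⟦(1 : ℤ)⟧' = 0 := by
        have : h ≫ f⟦(1 : ℤ)⟧' = 0 := comp_distTriang_mor_zero₃₁ _ hT
        rw [Category.assoc, this, comp_zero]
      set w : C⟦(-1 : ℤ)⟧ ⟶ A := (adj1.homEquiv C A).symm (u ≫ h) with hw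
      have hwf : w ≫ f = 0 := by
        rw [hw]
        erw [← Adjunction.homEquiv_naturality_right_symm]
        erw [h0]
        erw [Adjunction.homEquiv_counit]
        change (shiftFunctor S (-1 : ℤ)).map 0 ≫ adj1.counit.app B = 0
        simp
        exact zero_comp
      have hw0 : w = 0 := by
        apply (hbij _ (isCompactObj_shift hC (-1 : ℤ))).1 (a₁ := w) (a₂ := 0)
        show w ≫ f = 0 ≫ f
        rw [hwf, Limits.zero_comp]
      have : u ≫ h = (adj1.homEquiv C A) w := by rw [hw]; simp; rfl
      rw [this, hw0]
      erw [Adjunction.homEquiv_unit]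
      change adj1.unit.app C ≫ (shiftFunctor S (1 : ℤ)).map 0 = 0
      simp
      exact comp_zero
    obtain ⟨w', hw'⟩ := Triangle.coyoneda_exact₃ _ hT u huh
    obtain ⟨v, hv⟩ := (hbij C hC).2 w'
    have hfg : f ≫ g = 0 := comp_distTriang_mor_zero₁₂ _ hT
    rw [hw', ← hv]
    dsimp
    change (v ≫ f) ≫ g = 0
    rw [Category.assoc, hfg, comp_zero]
  exact (Triangle.isZero₃_iff_isIso₁ _ hT).1 hZ

end Key

/-- Let `S` be a compactly generated triangulated category and `F : S ⥤ T` an exact functor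
preserving coproducts, with right adjoint `G`. Then `G` preserves coproducts if and only if
`F` preserves compactness. -/
theorem stmt8 {S : Type u₁} [Category.{v} S] [HasZeroObject S] [HasShift S ℤ]
    [Preadditive S] [∀ n : ℤ, (shiftFunctor S n).Additive] [Pretriangulated S]
    [HasCoproducts.{v} S]
    {T : Type u₂} [Category.{v} T] [HasZeroObject T] [HasShift T ℤ]
    [Preadditive T] [∀ n : ℤ, (shiftFunctor T n).Additive] [Pretriangulated T]
    [HasCoproducts.{v} T]
    -- `S` is compactly generated:
    (hsmall : ∃ (ι : Type v) (g : ι → S), ∀ X : S, IsCompactObj X → ∃ i, Nonempty (X ≅ g i))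
    (hgen : ∀ X : S, (∀ C : S, IsCompactObj C → ∀ f : C ⟶ X, f = 0) → IsZero X)
    (F : S ⥤ T) [F.CommShift ℤ] [F.IsTriangulated]
    [∀ ι : Type v, PreservesColimitsOfShape (Discrete ι) F]
    (G : T ⥤ S) (adj : F ⊣ G) :
    (∀ ι : Type v, Nonempty (PreservesColimitsOfShape (Discrete ι) G)) ↔
      (∀ X : S, IsCompactObj X → IsCompactObj (F.obj X)) := by
  -- `G` is additive
  have hshape : HasColimitsOfShape (Discrete WalkingPair) T :=
    hasColimitsOfShape_of_equivalence
      (Discrete.equivalence (Equiv.ulift : ULift.{v} WalkingPair ≃ WalkingPair))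
  have : HasBinaryCoproducts T := hshape
  have : HasBinaryBiproducts T := HasBinaryBiproducts.of_hasBinaryCoproducts
  have hlim : PreservesLimitsOfSize.{0, 0} G := adj.rightAdjoint_preservesLimits
  have : G.IsRightAdjoint := ⟨F, ⟨adj⟩⟩
  have hGadd : G.Additive := G.additive_of_preserves_binary_products
  constructor
  · intro hG X hX
    exact isCompactObj_of_adj F G adj X hX hG
  · intro hF ι
    have key : ∀ Y : ι → T, PreservesColimit (Discrete.functor Y) G := by
      intro Y
      have hiso : IsIso (sigmaComparison G Y) := by
        apply isIso_of_compact_bijective hgen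
        intro C hC
        -- `Hom(C, -)` as an `AddCommGrp`-valued functor
        set Hc := preadditiveCoyoneda.obj (op C) with hHc
        have h1 : PreservesColimitsOfShape (Discrete ι) Hc := (hC ι).some
        have h2 : PreservesColimitsOfShape (Discrete ι)
            (preadditiveCoyoneda.obj (op (F.obj C))) := (hF C hC ι).some
        have h3 : PreservesColimitsOfShape (Discrete ι) (G ⋙ Hc) :=
          preservesColimitsOfShape_of_natIso (adjCoyonedaIso F G adj C)
        -- the compatibility of comparison maps
        have hcomp : sigmaComparison (G ⋙ Hc) Y =
            sigmaComparison Hc (fun i => G.obj (Y i)) ≫ Hc.map (sigmaComparison G Y) := by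
          apply Sigma.hom_ext
          intro i
          have e1 : Sigma.ι (fun b => (G ⋙ Hc).obj (Y b)) i ≫ sigmaComparison (G ⋙ Hc) Y =
              (G ⋙ Hc).map (Sigma.ι Y i) := ι_comp_sigmaComparison _ _ _
          have e2 : Sigma.ι (fun b => Hc.obj (G.obj (Y b))) i ≫
                sigmaComparison Hc (fun b => G.obj (Y b)) =
              Hc.map (Sigma.ι (fun b => G.obj (Y b)) i) := ι_comp_sigmaComparison _ _ _
          have e2' : Sigma.ι (fun b => (G ⋙ Hc).obj (Y b)) i ≫
                sigmaComparison Hc (fun b => G.obj (Y b)) =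
              Hc.map (Sigma.ι (fun b => G.obj (Y b)) i) := e2
          rw [e1, ← Category.assoc, e2', ← Hc.map_comp, ι_comp_sigmaComparison]
          rfl
        have i1 : IsIso (sigmaComparison (G ⋙ Hc) Y) := inferInstance
        have i2 : IsIso (sigmaComparison Hc (fun i => G.obj (Y i))) := inferInstance
        have i3 : IsIso (Hc.map (sigmaComparison G Y)) := by
          rw [hcomp] at i1
          exact IsIso.of_isIso_comp_left (sigmaComparison Hc (fun i => G.obj (Y i)))
            (Hc.map (sigmaComparison G Y))
        have := (forget AddCommGrpCat).map_isIso (Hc.map (sigmaComparison G Y))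
        have hbij := ConcreteCategory.bijective_of_isIso (Hc.map (sigmaComparison G Y))
        exact hbij
      exact PreservesCoproduct.of_iso_comparison G Y
    have := key
    exact ⟨preservesColimitsOfShape_of_discrete G⟩
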